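/- arXiv:1610.06130 — 3 statements merged into one kernel-verified Lean document; each statement's English description precedes it below -/
import Mathlib

section
/- In the Baumslag–Solitar group K = ⟨x, y | y⁻¹xy = x²⟩, if v and v' are two distinct words in the alphabet {y, yx} (i.e., distinct finite sequences of factors, each factor being y or yx), then v and v' represent distinct elements of K. -/
/-- The single relator `y⁻¹ x y (x²)⁻¹` of the Baumslag–Solitar group BS(1,2),
where `x` is generator `0` and `y` is generator `1`. -/
def bsRels : Set (FreeGroup (Fin 2)) :=
  {(FreeGroup.of 1)⁻¹ * FreeGroup.of 0 * FreeGroup.of 1 * ((FreeGroup.of 0) ^ 2)⁻¹}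

/-- The Baumslag–Solitar group `K = ⟨x, y | y⁻¹xy = x²⟩`. -/
abbrev BS := PresentedGroup bsRels

/-- The generator `x` of `K`. -/
def X : BS := PresentedGroup.of 0

/-- The generator `y` of `K`. -/
def Y : BS := PresentedGroup.of 1

/-- The element of `K` represented by a word in the alphabet `{y, yx}`:
a word is a list of factors, `false` standing for the factor `y` and `true`
for the factor `yx`; the list is read from left to right. -/
def wordElem (v : List Bool) : BS :=
  (v.map (fun b => if b then Y * X else Y)).prod

/-! Auxiliary: a faithful-enough permutation representation of BS(1,2) on ℚ,
with `x` acting as `t ↦ t + 1` and `y` acting as `t ↦ t / 2`. -/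

def xP : Equiv.Perm ℚ := Equiv.addRight 1
def yP : Equiv.Perm ℚ := Equiv.mulRight₀ (2⁻¹ : ℚ) (by norm_num)

def gens : Fin 2 → Equiv.Perm ℚ := ![xP, yP]

lemma relcheck : ∀ r ∈ bsRels, FreeGroup.lift gens r = 1 := by
  intro r hr
  rcases hr with rfl
  simp only [map_mul, map_inv, map_pow, FreeGroup.lift_apply_of]
  have key : gens 0 * gens 1 = gens 1 * gens 0 ^ 2 := by
    ext t
    simp [gens, xP, yP, Equiv.Perm.mul_apply]
    ring
  rw [mul_assoc (gens 1)⁻¹ (gens 0) (gens 1), key, ← mul_assoc, inv_mul_cancel,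
    one_mul, mul_inv_cancel]

def φ : BS →* Equiv.Perm ℚ := PresentedGroup.toGroup relcheck

/-- The binary value `0.b₁b₂…bₙ` of a word. -/
def val : List Bool → ℚ
  | [] => 0
  | b :: v => (val v + (if b then 1 else 0)) / 2

lemma eval_word (v : List Bool) (t : ℚ) :
    φ (wordElem v) t = t / 2 ^ v.length + val v := by
  induction v with
  | nil => simp [wordElem, val, φ]
  | cons b v ih =>
    have hx : φ X = xP := PresentedGroup.toGroup.of relcheck
    have hy : φ Y = yP := PresentedGroup.toGroup.of relcheck
    have : wordElem (b :: v) = (if b then Y * X else Y) * wordElem v := by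
      simp [wordElem]
    rw [this, map_mul, Equiv.Perm.mul_apply, ih]
    cases b <;>
      simp [hx, hy, xP, yP, Equiv.Perm.mul_apply, val, pow_succ] <;> ring

lemma val_nonneg (v : List Bool) : 0 ≤ val v ∧ val v < 1 := by
  induction v with
  | nil => simp [val]
  | cons b v ih =>
    cases b <;> simp [val] <;> constructor <;> linarith [ih.1, ih.2]

lemma inj_aux (v v' : List Bool) (hl : v.length = v'.length) (hv : val v = val v') :
    v = v' := by
  induction v generalizing v' with
  | nil => cases v' with
    | nil => rfl
    | cons b t => simp at hl
  | cons b t ih =>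
    cases v' with
    | nil => simp at hl
    | cons b' t' =>
      simp only [List.length_cons, Nat.add_right_cancel_iff] at hl
      have h1 := val_nonneg t
      have h2 := val_nonneg t'
      have hval : val t = val t' ∧ b = b' := by
        cases b <;> cases b' <;> simp [val] at hv ⊢ <;>
          first | linarith | constructor <;> linarith
      rw [hval.2, ih t' hl hval.1]

theorem stmt1 (v v' : List Bool) (h : v ≠ v') : wordElem v ≠ wordElem v' := by
  intro he
  apply h
  have h0 := congrFun (congrArg (fun g => (φ g : ℚ → ℚ)) he) 0
  have h1 := congrFun (congrArg (fun g => (φ g : ℚ → ℚ)) he) 1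
  simp only [eval_word] at h0 h1
  have hval : val v = val v' := by simpa using h0
  have hlen : v.length = v'.length := by
    have hd : (1:ℚ) / 2 ^ v.length = 1 / 2 ^ v'.length := by
      rw [hval] at h1; linarith
    rw [div_eq_div_iff (by positivity) (by positivity)] at hd
    have h2 : (2:ℚ) ^ v.length = 2 ^ v'.length := by linarith
    have h3 : ((2 ^ v.length : ℕ) : ℚ) = ((2 ^ v'.length : ℕ) : ℚ) := by
      push_cast; exact h2
    exact Nat.pow_right_injective (le_refl 2) (Nat.cast_injective h3)
  exact inj_aux v v' hlen hval
end

section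
/- Define words w_{n,m} over the alphabet {x, y, t} as follows: w_{n,0} = [y^{−E_n} x y^{E_n}, x³][y^{−E_n} x y^{E_n}, x⁵][y^{−E_n} x y^{E_n}, x⁷], and w_{n,m+1} is obtained from w_{n,m} by replacing each subword y^{±E_{n−m}} with t⁻¹ y^{−E_{n−m−1}} x^{±1} y^{E_{n−m−1}} t. Then the word w_n := w_{n,n} has length at most 100 · 2^n. -/
/-- The tower of exponentials: `expT 0 x = x`, `expT (m+1) x = 2 ^ expT m x`. -/
def expT : ℕ → ℕ → ℕ
  | 0, x => x
  | m + 1, x => 2 ^ expT m x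

/-- `E n = expT n 1`. -/
def E (n : ℕ) : ℕ := expT n 1

/-- A letter over the alphabet `{x, y, t}` together with a sign: the generator `x` is `0`,
`y` is `1`, `t` is `2`; `true` is the letter itself and `false` its formal inverse. -/
abbrev Ltr := Fin 3 × Bool

/-- The letter `x`. -/
def xL : Ltr := (0, true)

/-- The letter `y`. -/
def yL : Ltr := (1, true)

/-- The letter `t`. -/
def tL : Ltr := (2, true)

/-- Formal inverse of a word. -/
def invWord (w : List Ltr) : List Ltr := (w.map fun p => (p.1, !p.2)).reverse

/-- `P k` is the word obtained from `y^{E_k}` by applying `k` rounds of the substitution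
which replaces `y^{±E_j}` by `t⁻¹ y^{−E_{j−1}} x^{±1} y^{E_{j−1}} t`; note that the word
replacing `y^{-E_j}` is the formal inverse of the word replacing `y^{E_j}`. -/
def P : ℕ → List Ltr
  | 0 => [yL]
  | k + 1 => (2, false) :: (invWord (P k) ++ [xL] ++ P k ++ [tL])

/-- The word `x^k`. -/
def xPow (k : ℕ) : List Ltr := List.replicate k xL

/-- The commutator word `[a, b] = a b a⁻¹ b⁻¹`. -/
def commW (a b : List Ltr) : List Ltr := a ++ b ++ invWord a ++ invWord b

/-- The word obtained from `y^{−E_n} x y^{E_n}` after all `n` substitutions. -/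
def conjW (n : ℕ) : List Ltr := invWord (P n) ++ [xL] ++ P n

/-- The word `w_n = w_{n,n}`, obtained from
`w_{n,0} = [y^{−E_n} x y^{E_n}, x³][y^{−E_n} x y^{E_n}, x⁵][y^{−E_n} x y^{E_n}, x⁷]`
by the `n` rounds of substitution. -/
def wN (n : ℕ) : List Ltr :=
  commW (conjW n) (xPow 3) ++ commW (conjW n) (xPow 5) ++ commW (conjW n) (xPow 7)

lemma invWord_len (w : List Ltr) : (invWord w).length = w.length := by
  simp [invWord]

lemma P_len (k : ℕ) : (P k).length = 4 * 2 ^ k - 3 := by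
  induction k with
  | zero => rfl
  | succ k ih =>
    have h3 : 3 ≤ 4 * 2 ^ k := by
      have : 1 ≤ 2 ^ k := Nat.one_le_two_pow
      omega
    simp [P, invWord_len, ih, pow_succ]
    omega

theorem stmt5 (n : ℕ) : (wN n).length ≤ 100 * 2 ^ n := by
  have h3 : 3 ≤ 4 * 2 ^ n := by
    have : 1 ≤ 2 ^ n := Nat.one_le_two_pow
    omega
  simp [wN, commW, conjW, xPow, invWord_len, P_len]
  omega
end

section
/- Fix constants C₁, C₂, C₃. Let P be a presentation with C₁ generators and C₂ relators, each relator of length at most C₃·N·ln N. Introduce as new generators all words of length at most ⌊log₂(N/ln N)⌋ in the original generators and their inverses (with defining relators), and rewrite each original relator as a word in the new generators by partitioning it into blocks of length ⌊log₂(N/ln N)⌋. Then the resulting presentation P₀ presents the same group and has total length l(P₀) ≤ C₄·N, where C₄ depends only on C₁, C₂, C₃ and not on N, for all sufficiently large N. -/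
/-- A word over `n` generators: a list of signed letters. -/
abbrev Word (n : ℕ) := List (Fin n × Bool)

/-- Formal inverse of a word. -/
def invW {n : ℕ} (w : Word n) : Word n := (w.map fun p => (p.1, !p.2)).reverse

/-- A finite presentation: `n` generators and a finite list of relator words. -/
structure Pres where
  n : ℕ
  rels : List (Word n)

/-- The set of relators of a presentation, as elements of the free group. -/
def Pres.relSet (P : Pres) : Set (FreeGroup (Fin P.n)) :=
  {r | ∃ w ∈ P.rels, r = FreeGroup.mk w}

/-- The group presented by `P`. -/
abbrev Pres.group (P : Pres) := PresentedGroup P.relSet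

/-- The length of a presentation: the sum of the lengths of the relators plus the
number of generators. -/
def Pres.len (P : Pres) : ℕ := P.n + (P.rels.map List.length).sum

/-- Push a word over `n` generators to a word over `n + 1` generators. -/
def liftW {n : ℕ} (w : Word n) : Word (n + 1) := w.map fun p => (p.1.castSucc, p.2)

/-- Elementary Tietze transformations with parameter `d`:
`op1` inserts a cancelling pair `x^ε x^{-ε}` into a relator (and `op1inv` deletes one);
`op2` cyclically permutes a relator; `op3` inverts a relator; `op4` replaces the relator
`a_i` by `a_i * a_j` for `i ≠ j`; `op5` adds a new generator `x` together with the relator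
`x·w`, where `w` is a word in the old generators of length at most `d - 1` (and `op5inv`
is its inverse); `op6` adds the empty relator (and `op6inv` removes it). -/
inductive TStep (d : ℕ) : Pres → Pres → Prop
  | op1 {n} (A B : List (Word n)) (a' a'' : Word n) (j : Fin n) (ε : Bool) :
      TStep d ⟨n, A ++ (a' ++ a'') :: B⟩ ⟨n, A ++ (a' ++ (j, ε) :: (j, !ε) :: a'') :: B⟩
  | op1inv {n} (A B : List (Word n)) (a' a'' : Word n) (j : Fin n) (ε : Bool) :
      TStep d ⟨n, A ++ (a' ++ (j, ε) :: (j, !ε) :: a'') :: B⟩ ⟨n, A ++ (a' ++ a'') :: B⟩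
  | op2 {n} (A B : List (Word n)) (a : Word n) (k : ℕ) :
      TStep d ⟨n, A ++ a :: B⟩ ⟨n, A ++ a.rotate k :: B⟩
  | op3 {n} (A B : List (Word n)) (a : Word n) :
      TStep d ⟨n, A ++ a :: B⟩ ⟨n, A ++ invW a :: B⟩
  | op4 {n} (rels : List (Word n)) (i j : Fin rels.length) (hij : i ≠ j) :
      TStep d ⟨n, rels⟩ ⟨n, rels.set i (rels.get i ++ rels.get j)⟩
  | op5 {n} (rels : List (Word n)) (w : Word n) (hw : w.length ≤ d - 1) :
      TStep d ⟨n, rels⟩ ⟨n + 1, rels.map liftW ++ [((Fin.last n, true) :: liftW w)]⟩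
  | op5inv {n} (rels : List (Word n)) (w : Word n) (hw : w.length ≤ d - 1) :
      TStep d ⟨n + 1, rels.map liftW ++ [((Fin.last n, true) :: liftW w)]⟩ ⟨n, rels⟩
  | op6 {n} (rels : List (Word n)) : TStep d ⟨n, rels⟩ ⟨n, rels ++ [[]]⟩
  | op6inv {n} (rels : List (Word n)) : TStep d ⟨n, rels ++ [[]]⟩ ⟨n, rels⟩

/-- `TLe d N P Q`: `P` can be transformed into `Q` by at most `N` elementary Tietze
transformations with parameter `d`. -/
inductive TLe (d : ℕ) : ℕ → Pres → Pres → Prop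
  | refl (N : ℕ) (P : Pres) : TLe d N P P
  | step {N : ℕ} {P Q R : Pres} : TStep d P Q → TLe d N Q R → TLe d (N + 1) P R

namespace S14

/- ============ part 1 (already checked) ============ -/
def letters (c : ℕ) : List (Fin c × Bool) :=
  (List.finRange c).flatMap fun i => [(i, true), (i, false)]

lemma mem_letters (c : ℕ) (l : Fin c × Bool) : l ∈ letters c := by
  obtain ⟨i, ε⟩ := l
  cases ε <;> simp [letters]

lemma length_letters (c : ℕ) : (letters c).length = 2 * c := by
  have h : ∀ (l : List (Fin c)),
      (l.flatMap fun i => [((i, true) : Fin c × Bool), (i, false)]).length = 2 * l.length := by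
    intro l
    induction l with
    | nil => simp
    | cons a t ih => simp [ih]; omega
  simpa [letters] using h (List.finRange c)

def allW (c : ℕ) : ℕ → List (Word c)
  | 0 => [[]]
  | L + 1 => [] :: ((letters c).flatMap fun l => (allW c L).map fun w => l :: w)

lemma mem_allW (c L : ℕ) (w : Word c) : w ∈ allW c L ↔ w.length ≤ L := by
  induction L generalizing w with
  | zero => simp [allW, List.length_eq_zero_iff]
  | succ L ih =>
    constructor
    · intro h
      rcases List.mem_cons.mp h with h | h
      · simp [h]
      · simp only [List.mem_flatMap, List.mem_map] at h
        obtain ⟨l, _, v, hv, rfl⟩ := h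
        have := (ih v).mp hv
        simpa using Nat.succ_le_succ this
    · intro h
      cases w with
      | nil => simp [allW]
      | cons l t =>
        refine List.mem_cons.mpr (Or.inr ?_)
        simp only [List.mem_flatMap, List.mem_map]
        exact ⟨l, mem_letters c l, t, (ih t).mpr (by simpa using Nat.le_of_succ_le_succ h), rfl⟩

lemma one_le_length_allW (c L : ℕ) : 0 < (allW c L).length :=
  List.length_pos_iff.mpr (List.ne_nil_of_mem ((mem_allW c L []).mpr (Nat.zero_le _)))

lemma length_allW (c L : ℕ) : (allW c L).length ≤ (2 * c + 1) ^ L := by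
  induction L with
  | zero => simp [allW]
  | succ L ih =>
    have key : ∀ (l : List (Fin c × Bool)),
        (l.flatMap fun a => (allW c L).map fun w => a :: w).length
          = l.length * (allW c L).length := by
      intro l
      induction l with
      | nil => simp
      | cons a t ih => simp [ih]; ring
    have hbind : ((letters c).flatMap fun l => (allW c L).map fun w => l :: w).length
        = 2 * c * (allW c L).length := by
      rw [key, length_letters]
    have h1 : 0 < (allW c L).length := one_le_length_allW c L
    calc (allW c (L+1)).length = 1 + 2 * c * (allW c L).length := by
          simp [allW, hbind]; omega
      _ ≤ (2*c+1) * (allW c L).length := by nlinarith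
      _ ≤ (2*c+1) * (2*c+1)^L := Nat.mul_le_mul_left _ ih
      _ = (2*c+1)^(L+1) := by ring

def chunksF {c : ℕ} (L : ℕ) : ℕ → Word c → List (Word c)
  | 0, _ => []
  | f + 1, r => if r = [] then [] else r.take L :: chunksF L f (r.drop L)

def chunks {c : ℕ} (L : ℕ) (r : Word c) : List (Word c) := chunksF L r.length r

lemma chunksF_nil {c : ℕ} (L f : ℕ) : chunksF (c := c) L f [] = [] := by
  cases f <;> simp [chunksF]

lemma join_chunksF {c : ℕ} (L : ℕ) (hL : 1 ≤ L) :
    ∀ (f : ℕ) (r : Word c), r.length ≤ f → (chunksF L f r).flatten = r := by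
  intro f
  induction f with
  | zero => intro r hr; simp [chunksF, List.length_eq_zero_iff.mp (Nat.le_zero.mp hr)]
  | succ f ih =>
    intro r hr
    by_cases h : r = []
    · simp [chunksF, h]
    · rw [chunksF, if_neg h]
      have : (r.drop L).length ≤ f := by
        rw [List.length_drop]
        have : 1 ≤ r.length := List.length_pos_iff.mpr h
        omega
      simp [List.flatten_cons, ih _ this]

lemma mem_chunksF_length {c : ℕ} (L : ℕ) :
    ∀ (f : ℕ) (r : Word c), ∀ B ∈ chunksF L f r, B.length ≤ L := by
  intro f
  induction f with
  | zero => intro r B hB; simp [chunksF] at hB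
  | succ f ih =>
    intro r B hB
    by_cases h : r = []
    · simp [chunksF, h] at hB
    · rw [chunksF, if_neg h] at hB
      rcases List.mem_cons.mp hB with rfl | hB
      · simpa using List.length_take_le L r
      · exact ih _ B hB

lemma length_chunksF {c : ℕ} (L : ℕ) (hL : 1 ≤ L) :
    ∀ (f : ℕ) (r : Word c), r.length ≤ f → (chunksF L f r).length * L ≤ r.length + L := by
  intro f
  induction f with
  | zero => intro r hr; simp [chunksF]
  | succ f ih =>
    intro r hr
    by_cases h : r = []
    · simp [chunksF, h]
    · rw [chunksF, if_neg h]
      have hd : (r.drop L).length ≤ f := by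
        rw [List.length_drop]
        have : 1 ≤ r.length := List.length_pos_iff.mpr h
        omega
      have := ih (r.drop L) hd
      rw [List.length_drop] at this
      by_cases h2 : L ≤ r.length
      · rw [List.length_cons, Nat.add_mul, one_mul]
        omega
      · have hnil : r.drop L = [] := List.drop_eq_nil_of_le (by omega)
        rw [hnil, chunksF_nil]
        rw [List.length_cons, List.length_nil, Nat.add_mul, one_mul]
        have : 1 ≤ r.length := List.length_pos_iff.mpr h
        omega

lemma join_chunks {c : ℕ} (L : ℕ) (hL : 1 ≤ L) (r : Word c) : (chunks L r).flatten = r :=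
  join_chunksF L hL _ r le_rfl

lemma mem_chunks_length {c : ℕ} (L : ℕ) (r : Word c) : ∀ B ∈ chunks L r, B.length ≤ L :=
  mem_chunksF_length L _ r

lemma length_chunks {c : ℕ} (L : ℕ) (hL : 1 ≤ L) (r : Word c) :
    (chunks L r).length * L ≤ r.length + L :=
  length_chunksF L hL _ r le_rfl

/- ============ part 2 : the compressed presentation ============ -/

variable (c L : ℕ)

abbrev Lst : List (Word c) := allW c L
abbrev D : ℕ := (Lst c L).length
abbrev n0 : ℕ := c + D c L

def emb (p : Fin c × Bool) : Fin (n0 c L) × Bool := (Fin.castAdd (D c L) p.1, p.2)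

noncomputable def jOf (w : Word c) : Fin (D c L) :=
  if h : w ∈ Lst c L then ⟨(List.mem_iff_getElem.mp h).choose,
    (List.mem_iff_getElem.mp h).choose_spec.choose⟩
  else ⟨0, one_le_length_allW c L⟩

lemma get_jOf {w : Word c} (hw : w ∈ Lst c L) : (Lst c L).get (jOf c L w) = w := by
  simp only [jOf, dif_pos hw, List.get_eq_getElem]
  exact (List.mem_iff_getElem.mp hw).choose_spec.choose_spec

noncomputable def xIdx (w : Word c) : Fin (n0 c L) := Fin.natAdd c (jOf c L w)

noncomputable def defRelW (x : Fin (n0 c L)) : Word c → Word (n0 c L)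
  | [] => [(x, true)]
  | l :: t => [(x, false), emb c L l, (xIdx c L t, true)]

noncomputable def defRelAt (j : Fin (D c L)) : Word (n0 c L) :=
  defRelW c L (Fin.natAdd c j) ((Lst c L).get j)

lemma defRelAt_def (j : Fin (D c L)) :
    defRelAt c L j = defRelW c L (Fin.natAdd c j) ((Lst c L).get j) := rfl

noncomputable def compRel (r : Word c) : Word (n0 c L) := (chunks L r).map fun B => (xIdx c L B, true)

noncomputable def P0 (rels : List (Word c)) : Pres :=
  ⟨n0 c L, ((List.finRange (D c L)).map (defRelAt c L)) ++ rels.map (compRel c L)⟩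

/- ============ free group helpers ============ -/

lemma mk_nil {α : Type*} : FreeGroup.mk ([] : List (α × Bool)) = 1 := rfl

lemma mk_cons {α : Type*} (a : α × Bool) (rest : List (α × Bool)) :
    FreeGroup.mk (a :: rest) = FreeGroup.mk [a] * FreeGroup.mk rest := by
  rw [show a :: rest = [a] ++ rest from rfl, ← FreeGroup.mul_mk]

lemma mk_three {α : Type*} (a b e : α × Bool) :
    FreeGroup.mk [a, b, e] = FreeGroup.mk [a] * FreeGroup.mk [b] * FreeGroup.mk [e] := by
  rw [show [a, b, e] = ([a] ++ [b]) ++ [e] from rfl, ← FreeGroup.mul_mk, ← FreeGroup.mul_mk]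

lemma mk_true {α : Type*} (x : α) : FreeGroup.mk [(x, true)] = FreeGroup.of x := rfl

lemma mk_false {α : Type*} (x : α) : FreeGroup.mk [(x, false)] = (FreeGroup.of x)⁻¹ := by
  rw [show (FreeGroup.of x) = FreeGroup.mk [(x, true)] from rfl, FreeGroup.inv_mk]
  rfl

lemma relSet_mk (Q : Pres) {w : Word Q.n} (hw : w ∈ Q.rels) :
    PresentedGroup.mk Q.relSet (FreeGroup.mk w) = 1 := by
  have h : FreeGroup.mk w ∈ Subgroup.normalClosure Q.relSet :=
    Subgroup.subset_normalClosure ⟨w, hw, rfl⟩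
  exact (QuotientGroup.eq_one_iff _).mpr h

/- ============ the key relations in the group of P0 ============ -/

variable (rels : List (Word c))

noncomputable def pi0 : FreeGroup (Fin (n0 c L)) →* PresentedGroup (P0 c L rels).relSet :=
  PresentedGroup.mk (P0 c L rels).relSet

local notation "π₀" => pi0 c L rels

lemma pi0_mk_one {w : Word (n0 c L)} (hw : w ∈ (P0 c L rels).rels) :
    π₀ (FreeGroup.mk w) = 1 := relSet_mk (P0 c L rels) hw

lemma defRelAt_mem (j : Fin (D c L)) : defRelAt c L j ∈ (P0 c L rels).rels :=
  List.mem_append_left _ (List.mem_map_of_mem (List.mem_finRange j))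

lemma x_at (m : ℕ) : ∀ (j : Fin (D c L)), ((Lst c L).get j).length ≤ m →
    π₀ (FreeGroup.of (Fin.natAdd c j)) =
      π₀ (FreeGroup.mk (((Lst c L).get j).map (emb c L))) := by
  induction m with
  | zero =>
    intro j hj
    have hnil : (Lst c L).get j = [] := List.length_eq_zero_iff.mp (Nat.le_zero.mp hj)
    have h1 := pi0_mk_one c L rels (defRelAt_mem c L rels j)
    rw [defRelAt_def, hnil] at h1
    simp only [defRelW, mk_true] at h1
    rw [hnil, List.map_nil, mk_nil, map_one]
    exact h1
  | succ m ih =>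
    intro j hj
    have h1 := pi0_mk_one c L rels (defRelAt_mem c L rels j)
    rw [defRelAt_def] at h1
    cases hgj : (Lst c L).get j with
    | nil =>
      rw [hgj] at h1
      simp only [defRelW, mk_true] at h1
      rw [List.map_nil, mk_nil, map_one]
      exact h1
    | cons l t =>
      rw [hgj] at h1
      simp only [defRelW] at h1
      rw [mk_three, mk_false, mk_true, map_mul, map_mul, map_inv, mul_assoc,
        inv_mul_eq_one] at h1
      rw [hgj, List.length_cons] at hj
      have hmem : l :: t ∈ Lst c L := by
        rw [← hgj]; exact List.get_mem _ _
      have htlen : t.length ≤ L := by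
        have := (mem_allW c L _).mp hmem
        simp only [List.length_cons] at this
        omega
      have htmem : t ∈ Lst c L := (mem_allW c L t).mpr htlen
      have htm : ((Lst c L).get (jOf c L t)).length ≤ m := by
        rw [get_jOf c L htmem]
        omega
      have ihx := ih (jOf c L t) htm
      rw [get_jOf c L htmem] at ihx
      have ihx' : π₀ (FreeGroup.of (xIdx c L t)) = π₀ (FreeGroup.mk (t.map (emb c L))) := ihx
      rw [ihx'] at h1
      rw [List.map_cons, mk_cons, map_mul]
      exact h1

lemma x_eq {w : Word c} (hw : w ∈ Lst c L) :
    π₀ (FreeGroup.of (xIdx c L w)) = π₀ (FreeGroup.mk (w.map (emb c L))) := by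
  have h := x_at c L rels ((Lst c L).get (jOf c L w)).length (jOf c L w) le_rfl
  rw [get_jOf c L hw] at h
  exact h

lemma x_join : ∀ Bs : List (Word c), (∀ B ∈ Bs, B ∈ Lst c L) →
    π₀ (FreeGroup.mk (Bs.map fun B => (xIdx c L B, true))) =
      π₀ (FreeGroup.mk ((Bs.flatten).map (emb c L))) := by
  intro Bs
  induction Bs with
  | nil => intro _; rfl
  | cons B Bs ih =>
    intro h
    rw [List.map_cons, mk_cons, map_mul, mk_true,
      x_eq c L rels (h B (List.mem_cons_self)),
      ih (fun B' hB' => h B' (List.mem_cons_of_mem _ hB')),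
      ← map_mul, FreeGroup.mul_mk, ← List.map_append, ← List.flatten_cons]

/- ============ the two homomorphisms ============ -/

noncomputable def piP : FreeGroup (Fin c) →* PresentedGroup (Pres.mk c rels).relSet :=
  PresentedGroup.mk _

noncomputable def fmap : Fin (n0 c L) → PresentedGroup (Pres.mk c rels).relSet :=
  Fin.addCases (fun i => piP c rels (FreeGroup.of i))
    (fun j => piP c rels (FreeGroup.mk ((Lst c L).get j)))

lemma fmap_left (i : Fin c) :
    fmap c L rels (Fin.castAdd (D c L) i) = piP c rels (FreeGroup.of i) := by
  simp [fmap]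

lemma fmap_right (j : Fin (D c L)) :
    fmap c L rels (Fin.natAdd c j) = piP c rels (FreeGroup.mk ((Lst c L).get j)) := by
  simp [fmap]

lemma fmap_xIdx {w : Word c} (hw : w ∈ Lst c L) :
    fmap c L rels (xIdx c L w) = piP c rels (FreeGroup.mk w) := by
  rw [show xIdx c L w = Fin.natAdd c (jOf c L w) from rfl, fmap_right, get_jOf c L hw]

lemma lift_fmap_single (p : Fin c × Bool) :
    FreeGroup.lift (fmap c L rels) (FreeGroup.mk [emb c L p])
      = piP c rels (FreeGroup.mk [p]) := by
  obtain ⟨i, ε⟩ := p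
  cases ε
  · rw [show emb c L (i, false) = (Fin.castAdd (D c L) i, false) from rfl, mk_false, map_inv,
      FreeGroup.lift_apply_of, fmap_left, mk_false, map_inv]
  · rw [show emb c L (i, true) = (Fin.castAdd (D c L) i, true) from rfl, mk_true,
      FreeGroup.lift_apply_of, fmap_left, mk_true]

lemma f_join : ∀ Bs : List (Word c), (∀ B ∈ Bs, B ∈ Lst c L) →
    FreeGroup.lift (fmap c L rels) (FreeGroup.mk (Bs.map fun B => (xIdx c L B, true)))
      = piP c rels (FreeGroup.mk Bs.flatten) := by
  intro Bs
  induction Bs with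
  | nil => intro _; rfl
  | cons B Bs ih =>
    intro h
    rw [List.map_cons, mk_cons, map_mul, mk_true, FreeGroup.lift_apply_of,
      fmap_xIdx c L rels (h B (List.mem_cons_self)),
      ih (fun x hx => h x (List.mem_cons_of_mem _ hx)),
      ← map_mul, FreeGroup.mul_mk, ← List.flatten_cons]

lemma hf (hL : 1 ≤ L) : ∀ r ∈ (P0 c L rels).relSet,
    FreeGroup.lift (fmap c L rels) r = 1 := by
  rintro r ⟨w, hw, rfl⟩
  change FreeGroup.lift (fmap c L rels) (FreeGroup.mk (α := Fin (n0 c L)) w) = 1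
  rcases List.mem_append.mp hw with h | h
  · obtain ⟨j, hj, rfl⟩ := List.mem_map.mp h
    rw [defRelAt_def]
    cases hgj : (Lst c L).get j with
    | nil =>
      rw [show defRelW c L (Fin.natAdd c j) [] = [(Fin.natAdd c j, true)] from rfl,
        mk_true, FreeGroup.lift_apply_of, fmap_right, hgj, mk_nil, map_one]
    | cons l t =>
      have hmem : l :: t ∈ Lst c L := by rw [← hgj]; exact List.get_mem _ _
      have htmem : t ∈ Lst c L := (mem_allW c L t).mpr (by
        have := (mem_allW c L _).mp hmem
        simp only [List.length_cons] at this
        omega)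
      rw [show defRelW c L (Fin.natAdd c j) (l :: t)
          = [(Fin.natAdd c j, false), emb c L l, (xIdx c L t, true)] from rfl]
      rw [mk_three, mk_false, map_mul, map_mul, map_inv, mk_true,
        FreeGroup.lift_apply_of, FreeGroup.lift_apply_of, fmap_right, hgj,
        fmap_xIdx c L rels htmem, lift_fmap_single]
      rw [show (l :: t : Word c) = [l] ++ t from rfl, ← FreeGroup.mul_mk, map_mul]
      group
  · obtain ⟨r0, hr0, rfl⟩ := List.mem_map.mp h
    rw [show compRel c L r0 = (chunks L r0).map (fun B => (xIdx c L B, true)) from rfl]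
    rw [f_join c L rels _ (fun B hB => (mem_allW c L B).mpr (mem_chunks_length L r0 B hB))]
    rw [join_chunks L hL r0]
    exact relSet_mk (Pres.mk c rels) hr0

noncomputable def gmap : Fin c → PresentedGroup (P0 c L rels).relSet :=
  fun i => pi0 c L rels (FreeGroup.of (Fin.castAdd (D c L) i))

lemma lift_gmap_mk (z : Word c) :
    FreeGroup.lift (gmap c L rels) (FreeGroup.mk z)
      = pi0 c L rels (FreeGroup.mk (z.map (emb c L))) := by
  have hcomp : FreeGroup.lift (gmap c L rels)
      = (pi0 c L rels).comp (FreeGroup.map (Fin.castAdd (D c L))) := by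
    apply FreeGroup.ext_hom
    intro a
    simp [gmap, FreeGroup.lift_apply_of, FreeGroup.map.of]
  rw [hcomp]
  simp only [MonoidHom.comp_apply, FreeGroup.map.mk]
  rfl

lemma hg (hL : 1 ≤ L) : ∀ r ∈ (Pres.mk c rels).relSet,
    FreeGroup.lift (gmap c L rels) r = 1 := by
  rintro r ⟨w, hw, rfl⟩
  rw [lift_gmap_mk]
  have hx := x_join c L rels (chunks L w)
    (fun B hB => (mem_allW c L B).mpr (mem_chunks_length L w B hB))
  rw [join_chunks L hL w] at hx
  rw [← hx]
  exact pi0_mk_one c L rels (List.mem_append_right _ (List.mem_map_of_mem hw))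

lemma main_iso (hL : 1 ≤ L) :
    Nonempty (PresentedGroup (Pres.mk c rels).relSet ≃* PresentedGroup (P0 c L rels).relSet) := by
  let φ : PresentedGroup (P0 c L rels).relSet →* PresentedGroup (Pres.mk c rels).relSet :=
    PresentedGroup.toGroup (hf c L rels hL)
  let ψ : PresentedGroup (Pres.mk c rels).relSet →* PresentedGroup (P0 c L rels).relSet :=
    PresentedGroup.toGroup (hg c L rels hL)
  refine ⟨MonoidHom.toMulEquiv ψ φ ?_ ?_⟩
  · apply PresentedGroup.ext
    intro i
    simp only [MonoidHom.comp_apply, MonoidHom.id_apply, ψ, φ, PresentedGroup.toGroup.of]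
    rw [show gmap c L rels i = PresentedGroup.of (Fin.castAdd (D c L) i) from rfl]
    exact (PresentedGroup.toGroup.of (hf c L rels hL)).trans (fmap_left c L rels i)
  · apply PresentedGroup.ext
    intro x
    simp only [MonoidHom.comp_apply, MonoidHom.id_apply]
    refine Fin.addCases
      (motive := fun x => ψ (φ (PresentedGroup.of x)) = PresentedGroup.of x)
      (fun i => ?_) (fun j => ?_) x
    · show ψ (φ (PresentedGroup.of (Fin.castAdd (D c L) i)))
        = PresentedGroup.of (Fin.castAdd (D c L) i)
      rw [show φ (PresentedGroup.of (Fin.castAdd (D c L) i))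
          = fmap c L rels (Fin.castAdd (D c L) i) from PresentedGroup.toGroup.of _,
        fmap_left,
        show piP c rels (FreeGroup.of i) = PresentedGroup.of i from rfl,
        PresentedGroup.toGroup.of]
      rfl
    · show ψ (φ (PresentedGroup.of (Fin.natAdd c j))) = PresentedGroup.of (Fin.natAdd c j)
      rw [show φ (PresentedGroup.of (Fin.natAdd c j))
          = fmap c L rels (Fin.natAdd c j) from PresentedGroup.toGroup.of _,
        fmap_right]
      have hψ : ψ (piP c rels (FreeGroup.mk ((Lst c L).get j)))
          = FreeGroup.lift (gmap c L rels) (FreeGroup.mk ((Lst c L).get j)) := rfl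
      rw [hψ, lift_gmap_mk, ← x_at c L rels ((Lst c L).get j).length j le_rfl]
      rfl

/- ============ length bounds ============ -/

lemma length_defRelAt (j : Fin (D c L)) : (defRelAt c L j).length ≤ 3 := by
  rw [defRelAt_def]
  cases (Lst c L).get j <;> simp [defRelW]

lemma sum_defRels :
    (((List.finRange (D c L)).map (defRelAt c L)).map List.length).sum ≤ 3 * D c L := by
  have h := List.sum_le_card_nsmul
      (((List.finRange (D c L)).map (defRelAt c L)).map List.length) 3 ?_
  · simpa [mul_comm] using h
  · intro x hx
    simp only [List.mem_map] at hx
    obtain ⟨w, ⟨j, _, rfl⟩, rfl⟩ := hx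
    exact length_defRelAt c L j

lemma sum_compRels (hL : 1 ≤ L) :
    ((rels.map (compRel c L)).map List.length).sum * L
      ≤ (rels.map List.length).sum + rels.length * L := by
  induction rels with
  | nil => simp
  | cons r rs ih =>
    simp only [List.map_cons, List.sum_cons, List.length_cons]
    have h1 : (compRel c L r).length * L ≤ r.length + L := by
      rw [show (compRel c L r).length = (chunks L r).length from List.length_map _]
      exact length_chunks L hL r
    have e1 : ((compRel c L r).length + ((rs.map (compRel c L)).map List.length).sum) * L
        = (compRel c L r).length * L + ((rs.map (compRel c L)).map List.length).sum * L :=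
      Nat.add_mul _ _ _
    have e2 : (rs.length + 1) * L = rs.length * L + L := Nat.succ_mul _ _
    omega

lemma len_P0 :
    (P0 c L rels).len
      = n0 c L + (((List.finRange (D c L)).map (defRelAt c L)).map List.length).sum
        + ((rels.map (compRel c L)).map List.length).sum := by
  simp only [Pres.len, P0, List.map_append, List.sum_append]
  omega

lemma sum_len_le {c : ℕ} (rels : List (Word c)) (M : ℝ)
    (h : ∀ r ∈ rels, (r.length : ℝ) ≤ M) :
    ((rels.map List.length).sum : ℝ) ≤ rels.length * M := by
  induction rels with
  | nil => simp
  | cons r rs ih =>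
    simp only [List.map_cons, List.sum_cons, List.length_cons]
    have h1 := h r (List.mem_cons_self)
    have h2 := ih (fun x hx => h x (List.mem_cons_of_mem _ hx))
    have e : ((rs.length : ℝ) + 1) * M = rs.length * M + M := by ring
    push_cast
    push_cast at h2
    linarith

end S14

set_option maxHeartbeats 2000000 in
theorem stmt14 (C₁ C₂ : ℕ) (C₃ : ℝ) (hC₃ : 0 < C₃) :
    ∃ (C₄ : ℝ) (N₀ : ℕ), ∀ N : ℕ, N ≥ N₀ → ∀ P : Pres,
      P.n = C₁ → P.rels.length = C₂ →
      (∀ r ∈ P.rels, (r.length : ℝ) ≤ C₃ * N * Real.log N) →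
      ∃ P₀ : Pres,
        Nonempty (PresentedGroup P.relSet ≃* PresentedGroup P₀.relSet) ∧
        (P₀.len : ℝ) ≤ C₄ * N := by
  classical
  refine ⟨(C₁ + C₂ + 4 : ℝ) + 2 * C₂ * C₃ * Real.log ((2 * C₁ + 2 : ℕ) : ℝ),
    (2 * C₁ + 2) ^ 2, ?_⟩
  intro N hN P hn hcard hlen
  subst hn
  set b : ℕ := 2 * P.n + 2 with hb
  set L : ℕ := Nat.log b N with hLdef
  have hb2 : 2 ≤ b := by omega
  have hN4 : 4 ≤ N := le_trans (by nlinarith) hN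
  have hN1 : 1 ≤ N := by omega
  have hbR : (2:ℝ) ≤ (b:ℝ) := by exact_mod_cast hb2
  have hlogb : 0 < Real.log b := Real.log_pos (by linarith)
  have hNR : (0:ℝ) < (N:ℝ) := by exact_mod_cast Nat.lt_of_lt_of_le Nat.zero_lt_one hN1
  have hN1R : (1:ℝ) ≤ (N:ℝ) := by exact_mod_cast hN1
  have hNb2 : ((b:ℝ)) ^ 2 ≤ (N:ℝ) := by exact_mod_cast hN
  have hlogN2 : 2 * Real.log b ≤ Real.log N := by
    have h := Real.log_le_log (by positivity) hNb2
    rw [Real.log_pow] at h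
    rw [Nat.cast_ofNat] at h
    linarith
  have hup : (N:ℝ) < (b:ℝ) ^ (L + 1) := by
    exact_mod_cast Nat.lt_pow_succ_log_self (by omega : 1 < b) N
  have hlogN_up : Real.log N < ((L:ℝ) + 1) * Real.log b := by
    have h := Real.log_lt_log hNR hup
    rw [Real.log_pow] at h
    rw [Nat.cast_add, Nat.cast_one] at h
    linarith
  have hLlow : Real.log N ≤ 2 * Real.log b * (L:ℝ) := by nlinarith
  have hL1 : 1 ≤ L := by
    by_contra hcon
    have hL0 : L = 0 := by omega
    rw [hL0] at hLlow
    push_cast at hLlow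
    nlinarith
  have hLpos : (0:ℝ) < (L:ℝ) := by
    exact_mod_cast Nat.lt_of_lt_of_le Nat.zero_lt_one hL1
  obtain ⟨e⟩ := S14.main_iso P.n L P.rels hL1
  refine ⟨S14.P0 P.n L P.rels, ⟨e⟩, ?_⟩
  set Dv : ℕ := S14.D P.n L with hD
  have hDN : (Dv:ℝ) ≤ (N:ℝ) := by
    have h1 : Dv ≤ (2 * P.n + 1) ^ L := S14.length_allW P.n L
    have h2 : (2 * P.n + 1) ^ L ≤ b ^ L := Nat.pow_le_pow_left (by omega) L
    have h3 : b ^ L ≤ N := Nat.pow_log_le_self b (by omega)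
    exact_mod_cast le_trans h1 (le_trans h2 h3)
  have hdef := S14.sum_defRels P.n L
  have hcomp := S14.sum_compRels P.n L P.rels hL1
  have hlenP0 := S14.len_P0 P.n L P.rels
  have hS : ((P.rels.map List.length).sum : ℝ) ≤ (C₂:ℝ) * (C₃ * N * Real.log N) := by
    have h := S14.sum_len_le P.rels (C₃ * N * Real.log N) hlen
    rw [hcard] at h
    exact h
  set T : ℕ := ((P.rels.map (S14.compRel P.n L)).map List.length).sum with hT
  have hTL : (T:ℝ) * (L:ℝ) ≤ ((P.rels.map List.length).sum : ℝ) + (C₂:ℝ) * (L:ℝ) := by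
    rw [hcard] at hcomp
    exact_mod_cast hcomp
  have hTbound : (T:ℝ) ≤ 2 * C₂ * C₃ * Real.log b * N + C₂ := by
    have hnn : (0:ℝ) ≤ (C₂:ℝ) * C₃ * (N:ℝ) := by positivity
    have h1 := mul_le_mul_of_nonneg_left hLlow hnn
    have key : (T:ℝ) * L ≤ (2 * C₂ * C₃ * Real.log b * N + C₂) * L := by
      nlinarith [hTL, hS, h1]
    exact le_of_mul_le_mul_right key hLpos
  have hn0 : S14.n0 P.n L = P.n + Dv := rfl
  have hlenN : (S14.P0 P.n L P.rels).len ≤ P.n + 4 * Dv + T := by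
    rw [hlenP0]
    omega
  have hlenR : ((S14.P0 P.n L P.rels).len : ℝ) ≤ (P.n:ℝ) + 4 * Dv + T := by
    exact_mod_cast hlenN
  have hfin : (0:ℝ) ≤ ((P.n:ℝ) + C₂) * ((N:ℝ) - 1) := by
    have : (0:ℝ) ≤ (P.n:ℝ) + C₂ := by positivity
    nlinarith
  calc ((S14.P0 P.n L P.rels).len : ℝ)
      ≤ (P.n:ℝ) + 4 * Dv + T := hlenR
    _ ≤ (P.n:ℝ) + 4 * N + (2 * C₂ * C₃ * Real.log b * N + C₂) := by linarith
    _ ≤ ((P.n:ℝ) + C₂ + 4 + 2 * C₂ * C₃ * Real.log b) * N := by nlinarith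
end
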